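/- For every Z ≥ 0 and every m ∈ ℤ, the infimum of E_m[a] over all finitely supported sequences a : ℕ → ℝ is greater than or equal to the infimum of E_0[a] over all finitely supported sequences a : ℕ → ℝ. -/

import Mathlib

open Real

/-- The critical coupling constant `Z_c`. -/
noncomputable def Zc : ℝ :=
  (Real.Gamma (1/4) ^ 4 / (8 * Real.pi ^ 2) + 8 * Real.pi ^ 2 / Real.Gamma (1/4) ^ 4)⁻¹

open Finset


noncomputable def bb (j : ℕ) : ℝ := (Nat.centralBinom j : ℝ) / 4 ^ j

lemma bb_pos (j : ℕ) : 0 < bb j := by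
  apply div_pos _ (by positivity)
  exact_mod_cast Nat.centralBinom_pos j

lemma bb_zero : bb 0 = 1 := by simp [bb, Nat.centralBinom_zero]

lemma bb_succ (j : ℕ) : ((j : ℝ) + 1) * bb (j + 1) = ((j : ℝ) + 1/2) * bb j := by
  have h := Nat.succ_mul_centralBinom_succ j
  have h' : ((j+1 : ℕ) : ℝ) * (Nat.centralBinom (j+1) : ℝ)
      = 2 * (2*(j:ℝ)+1) * (Nat.centralBinom j : ℝ) := by exact_mod_cast congrArg (Nat.cast : ℕ → ℝ) h
  unfold bb
  push_cast at h' ⊢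
  have h4 : (4:ℝ) ^ j ≠ 0 := by positivity
  field_simp
  have h2 : ((4:ℝ)^j) * (((j:ℝ) + 1) * ((Nat.centralBinom (j + 1) : ℕ) : ℝ)) = ((4:ℝ)^j) * (2 * (2 * (j:ℝ) + 1) * ((Nat.centralBinom j : ℕ) : ℝ)) := by rw [h']
  rw [pow_succ]
  linear_combination 2 * h2

lemma bb_succ_le (j : ℕ) : bb (j + 1) ≤ bb j := by
  have h := bb_succ j
  have hp : (0:ℝ) < (j:ℝ) + 1 := by positivity
  nlinarith [bb_pos j, bb_pos (j+1)]

lemma bb_anti : ∀ {i j : ℕ}, i ≤ j → bb j ≤ bb i := by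
  intro i j h
  induction j with
  | zero => simp_all
  | succ n ih =>
    rcases Nat.lt_or_ge i (n+1) with h' | h'
    · exact le_trans (bb_succ_le n) (ih (Nat.lt_succ_iff.mp h'))
    · have : i = n + 1 := le_antisymm h h'
      simp [this]

lemma refl_sum (N : ℕ) :
    2 * ∑ k ∈ range (N+1), (k:ℝ) * (bb k * bb (N-k))
      = (N:ℝ) * ∑ k ∈ range (N+1), bb k * bb (N-k) := by
  have hrefl : ∑ k ∈ range (N+1), ((N-k : ℕ):ℝ) * (bb (N-k) * bb (N-(N-k)))
      = ∑ k ∈ range (N+1), (k:ℝ) * (bb k * bb (N-k)) := by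
    exact Finset.sum_range_reflect (fun k => (k:ℝ) * (bb k * bb (N-k))) (N+1)
  have hcongr : ∑ k ∈ range (N+1), ((N-k : ℕ):ℝ) * (bb (N-k) * bb (N-(N-k)))
      = ∑ k ∈ range (N+1), ((N:ℝ)-(k:ℝ)) * (bb k * bb (N-k)) := by
    apply Finset.sum_congr rfl
    intro k hk
    have hkN : k ≤ N := Nat.lt_succ_iff.mp (Finset.mem_range.mp hk)
    rw [Nat.sub_sub_self hkN, Nat.cast_sub hkN, mul_comm (bb (N-k)) (bb k)]
  have key : ∑ k ∈ range (N+1), (k:ℝ) * (bb k * bb (N-k))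
      = ∑ k ∈ range (N+1), ((N:ℝ)-(k:ℝ)) * (bb k * bb (N-k)) := by rw [← hrefl, hcongr]
  rw [two_mul]
  nth_rewrite 2 [key]
  rw [← Finset.sum_add_distrib, Finset.mul_sum]
  apply Finset.sum_congr rfl
  intro k hk
  ring

lemma conv_eq_one : ∀ N : ℕ, ∑ k ∈ range (N+1), bb k * bb (N-k) = 1 := by
  intro N
  induction N with
  | zero => simp [bb_zero]
  | succ N ih =>
    have hstep : ∑ k ∈ range (N+2), (k:ℝ) * (bb k * bb (N+1-k))
        = ∑ j ∈ range (N+1), ((j:ℝ) + 1/2) * (bb j * bb (N-j)) := by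
      rw [Finset.sum_range_succ' (fun k => (k:ℝ) * (bb k * bb (N+1-k))) (N+1)]
      simp only [Nat.cast_zero, zero_mul, add_zero]
      apply Finset.sum_congr rfl
      intro j hj
      have : N + 1 - (j+1) = N - j := by omega
      rw [this]
      push_cast
      have hb := bb_succ j
      calc ((j:ℝ)+1) * (bb (j+1) * bb (N-j)) = (((j:ℝ)+1) * bb (j+1)) * bb (N-j) := by ring
        _ = (((j:ℝ)+1/2) * bb j) * bb (N-j) := by rw [hb]
        _ = ((j:ℝ)+1/2) * (bb j * bb (N-j)) := by ring
    have h1 : 2 * ∑ k ∈ range (N+2), (k:ℝ) * (bb k * bb (N+1-k))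
        = ((N:ℝ)+1) * ∑ k ∈ range (N+2), bb k * bb (N+1-k) := by
      have := refl_sum (N+1)
      push_cast at this ⊢
      convert this using 2
    have h2 : 2 * ∑ j ∈ range (N+1), ((j:ℝ)+1/2) * (bb j * bb (N-j))
        = ((N:ℝ)+1) * ∑ j ∈ range (N+1), bb j * bb (N-j) := by
      have hsplit : ∑ j ∈ range (N+1), ((j:ℝ)+1/2) * (bb j * bb (N-j))
          = (∑ j ∈ range (N+1), (j:ℝ) * (bb j * bb (N-j)))
            + (1/2) * ∑ j ∈ range (N+1), bb j * bb (N-j) := by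
        rw [Finset.mul_sum, ← Finset.sum_add_distrib]
        apply Finset.sum_congr rfl; intro j hj; ring
      rw [hsplit, mul_add, refl_sum N]
      ring
    have hpos : ((N:ℝ)+1) ≠ 0 := by positivity
    have : ((N:ℝ)+1) * ∑ k ∈ range (N+2), bb k * bb (N+1-k)
        = ((N:ℝ)+1) * ∑ j ∈ range (N+1), bb j * bb (N-j) := by
      rw [← h1, hstep, h2]
    rw [mul_left_cancel₀ hpos this, ih]

lemma conv_id (N : ℕ) :
    ∑ k ∈ range (N+1), (bb k - bb (k+1)) * bb (N-k) = bb (N+1) := by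
  have e1 : ∑ k ∈ range (N+1), (bb k - bb (k+1)) * bb (N-k)
      = (∑ k ∈ range (N+1), bb k * bb (N-k)) - ∑ k ∈ range (N+1), bb (k+1) * bb (N-k) := by
    rw [← Finset.sum_sub_distrib]; apply Finset.sum_congr rfl; intro k hk; ring
  have e2 : ∑ k ∈ range (N+2), bb k * bb (N+1-k)
      = (∑ k ∈ range (N+1), bb (k+1) * bb (N-k)) + bb 0 * bb (N+1) := by
    rw [Finset.sum_range_succ' (fun k => bb k * bb (N+1-k)) (N+1)]
    simp only [Nat.sub_zero]
    congr 1
    apply Finset.sum_congr rfl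
    intro j hj
    congr 2
    omega
  have c1 := conv_eq_one N
  have c2 := conv_eq_one (N+1)
  rw [e2] at c2
  rw [e1, c1, bb_zero] at *
  linarith

noncomputable def TT (n n' : ℕ) : ℝ :=
  ∑ k ∈ range (min n n' + 1), bb k * bb (n-k) * bb (n'-k)

lemma TT_symm (n n' : ℕ) : TT n n' = TT n' n := by
  unfold TT
  rw [min_comm]
  apply Finset.sum_congr rfl
  intro k hk; ring

lemma TT_shift' (n n' : ℕ) (h : n ≤ n') : TT (n+1) (n'+1) ≤ TT n n' := by
  have hmin : min n n' = n := min_eq_left h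
  have hmin' : min (n+1) (n'+1) = n+1 := min_eq_left (by omega)
  have e1 : TT (n+1) (n'+1)
      = (∑ j ∈ range (n+1), bb (j+1) * bb (n-j) * bb (n'-j)) + bb (n+1) * bb (n'+1) := by
    unfold TT
    rw [hmin', Finset.sum_range_succ' (fun k => bb k * bb (n+1-k) * bb (n'+1-k)) (n+1)]
    simp only [Nat.sub_zero, bb_zero, one_mul]
    congr 1
    apply Finset.sum_congr rfl
    intro j hj
    have e : n + 1 - (j+1) = n - j := by omega
    have e' : n' + 1 - (j+1) = n' - j := by omega
    rw [e, e']
  have e2 : TT n n' = ∑ j ∈ range (n+1), bb j * bb (n-j) * bb (n'-j) := by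
    unfold TT; rw [hmin]
  have key : bb (n+1) * bb (n'+1)
      ≤ ∑ j ∈ range (n+1), (bb j - bb (j+1)) * bb (n-j) * bb (n'-j) := by
    have step1 : ∑ j ∈ range (n+1), (bb j - bb (j+1)) * bb (n-j) * bb (n'+1)
        ≤ ∑ j ∈ range (n+1), (bb j - bb (j+1)) * bb (n-j) * bb (n'-j) := by
      apply Finset.sum_le_sum
      intro j hj
      have hj' : j ≤ n := Nat.lt_succ_iff.mp (Finset.mem_range.mp hj)
      have h1 : 0 ≤ bb j - bb (j+1) := sub_nonneg.mpr (bb_succ_le j)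
      have h2 : bb (n'+1) ≤ bb (n'-j) := bb_anti (by omega)
      have h3 : 0 < bb (n-j) := bb_pos _
      nlinarith [mul_nonneg (mul_nonneg h1 h3.le) (sub_nonneg.mpr h2)]
    have step2 : ∑ j ∈ range (n+1), (bb j - bb (j+1)) * bb (n-j) * bb (n'+1)
        = bb (n+1) * bb (n'+1) := by
      rw [← Finset.sum_mul]
      rw [show (∑ j ∈ range (n+1), (bb j - bb (j+1)) * bb (n-j)) = bb (n+1) from conv_id n]
    linarith [step1, step2.symm.le]
  have expand : ∑ j ∈ range (n+1), (bb j - bb (j+1)) * bb (n-j) * bb (n'-j)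
      = (∑ j ∈ range (n+1), bb j * bb (n-j) * bb (n'-j))
        - ∑ j ∈ range (n+1), bb (j+1) * bb (n-j) * bb (n'-j) := by
    rw [← Finset.sum_sub_distrib]
    apply Finset.sum_congr rfl; intro j hj; ring
  rw [e1, e2]
  rw [expand] at key
  linarith

lemma TT_shift (n n' : ℕ) : TT (n+1) (n'+1) ≤ TT n n' := by
  rcases le_total n n' with h | h
  · exact TT_shift' n n' h
  · rw [TT_symm (n+1) (n'+1), TT_symm n n']
    exact TT_shift' n' n h

/-- Pochhammer symbol `(x)_a = Γ(x+a)/Γ(x)` for real arguments. -/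
noncomputable def poch (x a : ℝ) : ℝ := Real.Gamma (x + a) / Real.Gamma x

lemma Gamma_nat_add_half (j : ℕ) :
    Real.Gamma ((j:ℝ) + 1/2) = Real.sqrt π * bb j * (Nat.factorial j : ℝ) := by
  induction j with
  | zero =>
    rw [show ((0:ℕ):ℝ) + 1/2 = 1/2 by norm_num, Real.Gamma_one_half_eq]
    simp [bb_zero]
  | succ j ih =>
    have hne : ((j:ℝ) + 1/2) ≠ 0 := by positivity
    have e : ((j:ℝ) + 1) + 1/2 = ((j:ℝ) + 1/2) + 1 := by ring
    push_cast
    rw [e, Real.Gamma_add_one hne, ih]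
    have hb := bb_succ j
    push_cast [Nat.factorial_succ]
    calc ((j:ℝ) + 1/2) * (√π * bb j * ↑(Nat.factorial j))
        = √π * (((j:ℝ) + 1/2) * bb j) * ↑(Nat.factorial j) := by ring
      _ = √π * (((j:ℝ) + 1) * bb (j+1)) * ↑(Nat.factorial j) := by rw [hb]
      _ = √π * bb (j+1) * (((j:ℝ) + 1) * ↑(Nat.factorial j)) := by ring

lemma poch_pos {x a : ℝ} (hx : 0 < x) (hxa : 0 < x + a) : 0 < poch x a :=
  div_pos (Real.Gamma_pos_of_pos hxa) (Real.Gamma_pos_of_pos hx)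

lemma poch_add_one {x a : ℝ} (hxa : 0 < x + a) : poch x (a + 1) = poch x a * (x + a) := by
  unfold poch
  rw [show x + (a + 1) = (x + a) + 1 by ring, Real.Gamma_add_one hxa.ne']
  ring

lemma poch_zero {x : ℝ} (hx : 0 < x) : poch x 0 = 1 := by
  simp [poch, div_self (Real.Gamma_pos_of_pos hx).ne']

lemma poch_neg_half (k : ℕ) : poch ((k:ℝ) + 1) (0 - 1/2) = Real.sqrt π * bb k := by
  unfold poch
  rw [show (k:ℝ) + 1 + (0 - 1/2) = (k:ℝ) + 1/2 by ring, _root_.Gamma_nat_add_half,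
    Real.Gamma_nat_eq_factorial]
  have : (Nat.factorial k : ℝ) ≠ 0 := by exact_mod_cast (Nat.factorial_pos k).ne'
  field_simp

lemma poch_half (j : ℕ) : poch ((j:ℝ) + 1/2) (1/2) = 1 / (Real.sqrt π * bb j) := by
  unfold poch
  rw [show (j:ℝ) + 1/2 + 1/2 = (j:ℝ) + 1 by ring, Gamma_nat_eq_factorial, _root_.Gamma_nat_add_half]
  have h1 : (Nat.factorial j : ℝ) ≠ 0 := by exact_mod_cast (Nat.factorial_pos j).ne'
  have h2 : Real.sqrt π ≠ 0 := by
    positivity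
  have h3 : bb j ≠ 0 := (bb_pos j).ne'
  field_simp

/-- Coulomb matrix elements `v^{m,0}_{n,n'}`. -/
noncomputable def v0 (m : ℤ) (n n' : ℕ) : ℝ :=
  (1 / (Real.pi * Real.sqrt (poch ((n : ℝ) + 1) ((|m| : ℤ) : ℝ) *
      poch ((n' : ℝ) + 1) ((|m| : ℤ) : ℝ)))) *
    ∑ k ∈ Finset.range (min n n' + 1),
      poch ((k : ℝ) + 1) (((|m| : ℤ) : ℝ) - 1/2) /
        (poch ((n : ℝ) - (k : ℝ) + 1/2) (1/2) * poch ((n' : ℝ) - (k : ℝ) + 1/2) (1/2))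

/-- Coulomb matrix elements `v^{m,1}_{n,n'}`. -/
noncomputable def v1 (m : ℤ) (n n' : ℕ) : ℝ :=
  if 0 ≤ m then v0 (m + 1) n n' else v0 (m + 1) (n + 1) (n' + 1)

lemma v0_natAbs (m : ℤ) (n n' : ℕ) : v0 m n n' = v0 (m.natAbs : ℤ) n n' := by
  unfold v0
  rw [show |(m.natAbs : ℤ)| = |m| by rw [Int.abs_natCast]; exact (Int.abs_eq_natAbs m).symm]

-- v0 at |m| = 0 in terms of TT
lemma v0_zero_eq (n n' : ℕ) : v0 0 n n' = Real.sqrt π * TT n n' := by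
  unfold v0 TT
  have habs : ((|(0:ℤ)| : ℤ) : ℝ) = 0 := by norm_num
  rw [habs]
  have hp : ∀ j : ℕ, poch ((j:ℝ) + 1) 0 = 1 := fun j => poch_zero (by positivity)
  rw [hp n, hp n', one_mul, Real.sqrt_one, mul_one, Finset.mul_sum, Finset.mul_sum]
  apply Finset.sum_congr rfl
  intro k hk
  have hk' : k ≤ min n n' := Nat.lt_succ_iff.mp (Finset.mem_range.mp hk)
  have hkn : k ≤ n := le_trans hk' (min_le_left _ _)
  have hkn' : k ≤ n' := le_trans hk' (min_le_right _ _)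
  have en : (n:ℝ) - (k:ℝ) = ((n - k : ℕ) : ℝ) := by
    rw [Nat.cast_sub hkn]
  have en' : (n':ℝ) - (k:ℝ) = ((n' - k : ℕ) : ℝ) := by
    rw [Nat.cast_sub hkn']
  rw [en, en', poch_neg_half, poch_half, poch_half]
  have hπ : (0:ℝ) < π := Real.pi_pos
  have hsπ : (0:ℝ) < Real.sqrt π := Real.sqrt_pos.mpr hπ
  have hsq : Real.sqrt π * Real.sqrt π = π := Real.mul_self_sqrt hπ.le
  have hb1 := bb_pos (n - k); have hb2 := bb_pos (n' - k); have hb0 := bb_pos k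
  field_simp
  linear_combination hsq

lemma v0_zero_shift (n n' : ℕ) : v0 0 (n+1) (n'+1) ≤ v0 0 n n' := by
  rw [v0_zero_eq, v0_zero_eq]
  exact mul_le_mul_of_nonneg_left (TT_shift n n') (Real.sqrt_nonneg π)

set_option maxHeartbeats 1000000 in
lemma v0_nat_succ_le (r n n' : ℕ) : v0 ((r:ℤ) + 1) n n' ≤ v0 (r:ℤ) n n' := by
  have habs1 : ((|(r:ℤ)| : ℤ) : ℝ) = (r:ℝ) := by
    rw [abs_of_nonneg (Int.natCast_nonneg r)]; push_cast; ring
  have habs2 : ((|(r:ℤ) + 1| : ℤ) : ℝ) = (r:ℝ) + 1 := by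
    rw [abs_of_nonneg (by positivity)]; push_cast; ring
  unfold v0
  rw [habs1, habs2]
  set R := (r:ℝ) with hRdef
  have hR0 : (0:ℝ) ≤ R := Nat.cast_nonneg r
  have hπ := Real.pi_pos
  have hPn : 0 < poch ((n:ℝ)+1) R := poch_pos (by positivity) (by positivity)
  have hPn' : 0 < poch ((n':ℝ)+1) R := poch_pos (by positivity) (by positivity)
  have hQ : 0 < Real.sqrt (poch ((n:ℝ)+1) R * poch ((n':ℝ)+1) R) :=
    Real.sqrt_pos.mpr (mul_pos hPn hPn')
  have en : poch ((n:ℝ)+1) (R+1) = poch ((n:ℝ)+1) R * ((n:ℝ)+1+R) :=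
    poch_add_one (by positivity)
  have en' : poch ((n':ℝ)+1) (R+1) = poch ((n':ℝ)+1) R * ((n':ℝ)+1+R) :=
    poch_add_one (by positivity)
  have hsqrt : Real.sqrt (poch ((n:ℝ)+1) (R+1) * poch ((n':ℝ)+1) (R+1))
      = Real.sqrt (poch ((n:ℝ)+1) R * poch ((n':ℝ)+1) R)
        * Real.sqrt (((n:ℝ)+1+R)*((n':ℝ)+1+R)) := by
    rw [en, en', ← Real.sqrt_mul (by positivity)]
    congr 1; ring
  rw [hsqrt, Finset.mul_sum, Finset.mul_sum]
  apply Finset.sum_le_sum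
  intro k hk
  have hk' : k ≤ min n n' := Nat.lt_succ_iff.mp (Finset.mem_range.mp hk)
  have hkn : (k:ℝ) ≤ (n:ℝ) := by exact_mod_cast le_trans hk' (min_le_left _ _)
  have hkn' : (k:ℝ) ≤ (n':ℝ) := by exact_mod_cast le_trans hk' (min_le_right _ _)
  have hk0 : (0:ℝ) ≤ (k:ℝ) := Nat.cast_nonneg k
  have hA : 0 < poch ((k:ℝ)+1) (R - 1/2) := poch_pos (by positivity) (by nlinarith)
  have hAk : poch ((k:ℝ)+1) ((R+1) - 1/2) = poch ((k:ℝ)+1) (R-1/2) * ((k:ℝ)+R+1/2) := by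
    rw [show (R+1) - 1/2 = (R - 1/2) + 1 by ring, poch_add_one (by nlinarith)]
    ring_nf
  have hD1 : 0 < poch ((n:ℝ) - (k:ℝ) + 1/2) (1/2) := poch_pos (by nlinarith) (by nlinarith)
  have hD2 : 0 < poch ((n':ℝ) - (k:ℝ) + 1/2) (1/2) := poch_pos (by nlinarith) (by nlinarith)
  have hGpos : 0 < Real.sqrt (((n:ℝ)+1+R)*((n':ℝ)+1+R)) := Real.sqrt_pos.mpr (by nlinarith)
  have hGge : (k:ℝ) + R + 1/2 ≤ Real.sqrt (((n:ℝ)+1+R)*((n':ℝ)+1+R)) := by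
    rw [Real.le_sqrt (by nlinarith) (by nlinarith)]
    nlinarith
  rw [hAk]
  set Q := Real.sqrt (poch ((n:ℝ)+1) R * poch ((n':ℝ)+1) R) with hQdef
  set G := Real.sqrt (((n:ℝ)+1+R)*((n':ℝ)+1+R)) with hGdef
  set A := poch ((k:ℝ)+1) (R-1/2) with hAdef
  set D1 := poch ((n:ℝ) - (k:ℝ) + 1/2) (1/2) with hD1def
  set D2 := poch ((n':ℝ) - (k:ℝ) + 1/2) (1/2) with hD2def
  have key : 1/(π*(Q*G)) * (A*((k:ℝ)+R+1/2)/(D1*D2))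
      = (1/(π*Q) * (A/(D1*D2))) * (((k:ℝ)+R+1/2)/G) := by
    field_simp
  rw [key]
  have hx : 0 ≤ 1/(π*Q) * (A/(D1*D2)) := by positivity
  have ht : ((k:ℝ)+R+1/2)/G ≤ 1 := (div_le_one hGpos).mpr hGge
  exact mul_le_of_le_one_right hx ht

lemma v0_nat_anti (n n' : ℕ) : ∀ {r s : ℕ}, r ≤ s → v0 (s:ℤ) n n' ≤ v0 (r:ℤ) n n' := by
  intro r s h
  induction s with
  | zero => simp_all
  | succ t ih =>
    rcases Nat.lt_or_ge r (t+1) with h' | h'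
    · have h2 := v0_nat_succ_le t n n'
      push_cast at h2 ⊢
      exact le_trans h2 (ih (Nat.lt_succ_iff.mp h'))
    · have : r = t + 1 := le_antisymm h h'
      simp [this]

lemma v0_nonneg (m : ℤ) (n n' : ℕ) : 0 ≤ v0 m n n' := by
  unfold v0
  have hM : (0:ℝ) ≤ ((|m| : ℤ) : ℝ) := by exact_mod_cast abs_nonneg m
  apply mul_nonneg
  · positivity
  · apply Finset.sum_nonneg
    intro k hk
    have hk' : k ≤ min n n' := Nat.lt_succ_iff.mp (Finset.mem_range.mp hk)
    have hkn : (k:ℝ) ≤ (n:ℝ) := by exact_mod_cast le_trans hk' (min_le_left _ _)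
    have hkn' : (k:ℝ) ≤ (n':ℝ) := by exact_mod_cast le_trans hk' (min_le_right _ _)
    have hk0 : (0:ℝ) ≤ (k:ℝ) := Nat.cast_nonneg k
    have h1 : 0 < poch ((k:ℝ)+1) (((|m| : ℤ) : ℝ) - 1/2) :=
      poch_pos (by positivity) (by nlinarith)
    have h2 : 0 < poch ((n:ℝ) - (k:ℝ) + 1/2) (1/2) := poch_pos (by nlinarith) (by nlinarith)
    have h3 : 0 < poch ((n':ℝ) - (k:ℝ) + 1/2) (1/2) := poch_pos (by nlinarith) (by nlinarith)
    positivity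

lemma V_nonneg (m : ℤ) (n n' : ℕ) : 0 ≤ v0 m n n' + v1 m n n' := by
  unfold v1
  split <;> exact add_nonneg (v0_nonneg _ _ _) (v0_nonneg _ _ _)

lemma V_le (m : ℤ) (n n' : ℕ) :
    v0 m n n' + v1 m n n' ≤ v0 0 n n' + v1 0 n n' := by
  have hRHS : v1 0 n n' = v0 1 n n' := by unfold v1; simp
  rw [hRHS]
  have h00 : v0 (0:ℤ) n n' = v0 (((0:ℕ):ℤ)) n n' := by norm_num
  have h11 : v0 (1:ℤ) n n' = v0 (((1:ℕ):ℤ)) n n' := by norm_num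
  unfold v1
  by_cases hm : 0 ≤ m
  · rw [if_pos hm]
    obtain ⟨r, rfl⟩ := Int.eq_ofNat_of_zero_le hm
    have h1 : v0 ((r:ℤ)) n n' ≤ v0 (((0:ℕ):ℤ)) n n' := v0_nat_anti n n' (Nat.zero_le r)
    have h2 : v0 ((r:ℤ)+1) n n' ≤ v0 (((1:ℕ):ℤ)) n n' := by
      have e : (r:ℤ) + 1 = (((r+1:ℕ)):ℤ) := by push_cast; ring
      rw [e]
      exact v0_nat_anti n n' (by omega)
    rw [h00, h11]
    exact add_le_add h1 h2
  · rw [if_neg hm]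
    push_neg at hm
    have hr : m.natAbs ≠ 0 := by
      intro h0
      have := Int.natAbs_eq_zero.mp h0
      omega
    have h1 : v0 m n n' ≤ v0 (((1:ℕ):ℤ)) n n' := by
      rw [v0_natAbs m]
      exact v0_nat_anti n n' (by omega)
    have h2 : v0 (m+1) (n+1) (n'+1) ≤ v0 (((0:ℕ):ℤ)) n n' := by
      rw [v0_natAbs (m+1)]
      calc v0 (((m+1).natAbs : ℕ) : ℤ) (n+1) (n'+1)
          ≤ v0 (((0:ℕ):ℤ)) (n+1) (n'+1) := v0_nat_anti (n+1) (n'+1) (Nat.zero_le _)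
        _ = v0 0 (n+1) (n'+1) := by norm_num
        _ ≤ v0 0 n n' := v0_zero_shift n n'
        _ = v0 (((0:ℕ):ℤ)) n n' := by norm_num
    rw [h00, h11]
    linarith

/-- The quadratic form `E_m[a]` at coupling `Z`. -/
noncomputable def Eform (Z : ℝ) (m : ℤ) (a : ℕ → ℝ) : ℝ :=
  (∑' n : ℕ, 2 * Real.sqrt ((n : ℝ) + ((max m 0 : ℤ) : ℝ) + 1) * a n ^ 2)
    - (Z / 2) * ∑' n : ℕ, ∑' n' : ℕ, a n * (v0 m n n' + v1 m n n') * a n'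

lemma Eform_eq_sum (Z : ℝ) (m : ℤ) (a : ℕ → ℝ) (s : Finset ℕ)
    (hs : ∀ n, n ∉ s → a n = 0) :
    Eform Z m a = (∑ n ∈ s, 2 * Real.sqrt ((n:ℝ) + ((max m 0 : ℤ):ℝ) + 1) * a n ^ 2)
      - (Z/2) * ∑ n ∈ s, ∑ n' ∈ s, a n * (v0 m n n' + v1 m n n') * a n' := by
  unfold Eform
  congr 1
  · exact tsum_eq_sum (fun n hn => by rw [hs n hn]; ring)
  · congr 1
    rw [tsum_eq_sum (s := s) (fun n hn => by simp [hs n hn])]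
    apply Finset.sum_congr rfl
    intro n _
    exact tsum_eq_sum (fun n' hn' => by rw [hs n' hn']; ring)

/-- The infimum of `E_m` over finitely supported sequences is at least the infimum of
`E_0`, expressed via lower bounds: every lower bound of the values of `E_0` is a lower
bound of the values of `E_m`. -/
theorem inf_Em_ge_inf_E0 (Z : ℝ) (hZ : 0 ≤ Z) (m : ℤ) (b : ℝ)
    (hb : ∀ a : ℕ → ℝ, (Function.support a).Finite → b ≤ Eform Z 0 a) :
    ∀ a : ℕ → ℝ, (Function.support a).Finite → b ≤ Eform Z m a := by
  classical
  intro a ha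
  set A : ℕ → ℝ := fun n => |a n| with hA
  have hsupp : Function.support A ⊆ Function.support a := by
    intro n hn
    simp only [Function.mem_support, hA, abs_ne_zero] at hn ⊢
    exact hn
  have hAfin : (Function.support A).Finite := ha.subset hsupp
  refine le_trans (hb A hAfin) ?_
  set s := ha.toFinset with hsdef
  have hs : ∀ n, n ∉ s → a n = 0 := by
    intro n hn
    by_contra h
    exact hn (ha.mem_toFinset.mpr h)
  have hsA : ∀ n, n ∉ s → A n = 0 := fun n hn => by simp [hA, hs n hn]
  rw [Eform_eq_sum Z m a s hs, Eform_eq_sum Z 0 A s hsA]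
  have hkin : ∑ n ∈ s, 2 * Real.sqrt ((n:ℝ) + ((max (0:ℤ) 0 : ℤ):ℝ) + 1) * A n ^ 2
      ≤ ∑ n ∈ s, 2 * Real.sqrt ((n:ℝ) + ((max m 0 : ℤ):ℝ) + 1) * a n ^ 2 := by
    apply Finset.sum_le_sum
    intro n _
    rw [show A n ^ 2 = a n ^ 2 from sq_abs (a n)]
    have h2 : Real.sqrt ((n:ℝ) + ((max (0:ℤ) 0 : ℤ):ℝ) + 1)
        ≤ Real.sqrt ((n:ℝ) + ((max m 0:ℤ):ℝ) + 1) := by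
      apply Real.sqrt_le_sqrt
      have hmx : ((max (0:ℤ) 0 : ℤ):ℝ) ≤ ((max m 0 : ℤ):ℝ) := by
        have : (max (0:ℤ) 0) ≤ max m 0 := by omega
        exact_mod_cast this
      linarith
    nlinarith [sq_nonneg (a n), Real.sqrt_nonneg ((n:ℝ) + ((max (0:ℤ) 0 : ℤ):ℝ) + 1)]
  have hpot : ∑ n ∈ s, ∑ n' ∈ s, a n * (v0 m n n' + v1 m n n') * a n'
      ≤ ∑ n ∈ s, ∑ n' ∈ s, A n * (v0 0 n n' + v1 0 n n') * A n' := by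
    apply Finset.sum_le_sum
    intro n _
    apply Finset.sum_le_sum
    intro n' _
    have h0 := V_nonneg m n n'
    have hle := V_le m n n'
    calc a n * (v0 m n n' + v1 m n n') * a n'
        ≤ |a n * (v0 m n n' + v1 m n n') * a n'| := le_abs_self _
      _ = A n * (v0 m n n' + v1 m n n') * A n' := by
          rw [abs_mul, abs_mul, abs_of_nonneg h0]
      _ ≤ A n * (v0 0 n n' + v1 0 n n') * A n' := by
          exact mul_le_mul_of_nonneg_right
            (mul_le_mul_of_nonneg_left hle (abs_nonneg _)) (abs_nonneg _)
  have hZ2 : (0:ℝ) ≤ Z/2 := by linarith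
  have := mul_le_mul_of_nonneg_left hpot hZ2
  linarith [hkin, this]
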